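/- Let (M, ∘, e) be an F-manifold with an eventual identity ε and a compatible, torsion-free connection ∇̃, and let X * Y := X ∘ Y ∘ ε^{-1}. The torsion-free connections compatible with * which are of the form ∇_X(Y) = ε ∘ ∇̃_X(ε^{-1}∘Y) + A(Y)∘X for some section A of End(TM) are exactly the connections ∇^W_X(Y) := ε ∘ ∇̃_X(ε^{-1} ∘ Y) − ∇̃_{ε^{-1}∘Y}(ε) ∘ X + W * X * Y, where W is an arbitrary vector field. -/

import Mathlib

/-- An algebraic model of the geometric setting of the paper: `R` plays the role
of the ring `C^∞(M)` of smooth functions on a manifold `M`, and `V` plays the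
role of the `C^∞(M)`-module of smooth vector fields on `M`, equipped with its
Lie bracket and with the action of vector fields on functions by derivations. -/
structure SmoothSetting (R V : Type*) [CommRing R] [LieRing V] [Module R V] where
  /-- the action `X(f)` of a vector field `X` on a function `f` -/
  deriv : V → R → R
  deriv_add : ∀ (X : V) (f g : R), deriv X (f + g) = deriv X f + deriv X g
  deriv_mul : ∀ (X : V) (f g : R), deriv X (f * g) = deriv X f * g + f * deriv X g
  add_deriv : ∀ (X Y : V) (f : R), deriv (X + Y) f = deriv X f + deriv Y f
  smul_deriv : ∀ (f : R) (X : V) (g : R), deriv (f • X) g = f * deriv X g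
  bracket_deriv : ∀ (X Y : V) (f : R),
    deriv ⁅X, Y⁆ f = deriv X (deriv Y f) - deriv Y (deriv X f)
  bracket_smul : ∀ (X : V) (f : R) (Y : V), ⁅X, f • Y⁆ = f • ⁅X, Y⁆ + deriv X f • Y

/-- `(m, e)` is an F-manifold structure: `m` is a fiber-preserving (i.e.
`C^∞(M)`-bilinear) commutative associative multiplication on vector fields with
unit field `e`, satisfying the Hertling–Manin integrability condition
`L_{X∘Y}(∘) = X ∘ L_Y(∘) + Y ∘ L_X(∘)`. -/
structure IsFManifold (R : Type*) {V : Type*} [CommRing R] [LieRing V] [Module R V]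
    (m : V → V → V) (e : V) : Prop where
  add_left : ∀ X Y Z : V, m (X + Y) Z = m X Z + m Y Z
  smul_left : ∀ (f : R) (X Y : V), m (f • X) Y = f • m X Y
  comm : ∀ X Y : V, m X Y = m Y X
  assoc : ∀ X Y Z : V, m (m X Y) Z = m X (m Y Z)
  unit : ∀ X : V, m e X = X
  hertling_manin : ∀ X Y Z W : V,
    ⁅m X Y, m Z W⁆ - m ⁅m X Y, Z⁆ W - m Z ⁅m X Y, W⁆ =
      m X (⁅Y, m Z W⁆ - m ⁅Y, Z⁆ W - m Z ⁅Y, W⁆)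
        + m Y (⁅X, m Z W⁆ - m ⁅X, Z⁆ W - m Z ⁅X, W⁆)

/-- The dual multiplication `X * Y := X ∘ Y ∘ ε⁻¹` determined by an invertible
vector field `ε` with inverse `εinv`. -/
def dualMul {V : Type*} (m : V → V → V) (εinv : V) : V → V → V :=
  fun X Y => m (m X Y) εinv

/-- `ε` (with inverse `εinv`) is an eventual identity on the F-manifold `(m, e)`:
it is invertible and the dual multiplication `X * Y = X ∘ Y ∘ ε⁻¹` defines an
F-manifold structure on `M` with unit field `ε`. -/
def IsEventualIdentity (R : Type*) {V : Type*} [CommRing R] [LieRing V] [Module R V]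
    (m : V → V → V) (e ε εinv : V) : Prop :=
  m ε εinv = e ∧ IsFManifold R (dualMul m εinv) ε

/-- `nabla` is a (Koszul) connection on the tangent bundle, i.e. on vector fields. -/
structure IsConnection {R V : Type*} [CommRing R] [LieRing V] [Module R V]
    (S : SmoothSetting R V) (nabla : V → V → V) : Prop where
  add_left : ∀ X Y Z : V, nabla (X + Y) Z = nabla X Z + nabla Y Z
  smul_left : ∀ (f : R) (X Y : V), nabla (f • X) Y = f • nabla X Y
  add_right : ∀ X Y Z : V, nabla X (Y + Z) = nabla X Y + nabla X Z
  leibniz : ∀ (X : V) (f : R) (Y : V), nabla X (f • Y) = S.deriv X f • Y + f • nabla X Y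

/-- `nabla` is torsion-free. -/
def IsTorsionFree {V : Type*} [LieRing V] (nabla : V → V → V) : Prop :=
  ∀ X Y, nabla X Y - nabla Y X = ⁅X, Y⁆

/-- The covariant derivative `∇_X(∘)(Y, Z)` of a multiplication `m` with respect
to a connection `nabla`. -/
def covMul {V : Type*} [LieRing V] (nabla m : V → V → V) (X Y Z : V) : V :=
  nabla X (m Y Z) - m (nabla X Y) Z - m Y (nabla X Z)

/-- `nabla` is compatible with the multiplication `m`: the vector valued tensor
`∇(∘)` is totally symmetric. -/
def IsCompatible {V : Type*} [LieRing V] (nabla m : V → V → V) : Prop :=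
  ∀ X Y Z, covMul nabla m X Y Z = covMul nabla m Y X Z ∧
    covMul nabla m X Y Z = covMul nabla m X Z Y

/-- The curvature `R^∇_{X,Y}Z = ∇_X∇_Y Z − ∇_Y∇_X Z − ∇_{[X,Y]}Z`. -/
def curv {V : Type*} [LieRing V] (nabla : V → V → V) (X Y Z : V) : V :=
  nabla X (nabla Y Z) - nabla Y (nabla X Z) - nabla ⁅X, Y⁆ Z

/-- `nabla` is flat. -/
def IsFlat {V : Type*} [LieRing V] (nabla : V → V → V) : Prop :=
  ∀ X Y Z, curv nabla X Y Z = 0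

/-- The curvature condition
`V∘R_{Z,Y}X + Y∘R_{V,Z}X + Z∘R_{Y,V}X = 0` of Lorenzoni–Pedroni. -/
def CurvCircCond {V : Type*} [LieRing V] (m nabla : V → V → V) : Prop :=
  ∀ X Y Z W, m W (curv nabla Z Y X) + m Y (curv nabla W Z X)
    + m Z (curv nabla Y W X) = 0

/-- A special family of connections on the F-manifold `(m, e)`: the family of
all `∇̃^V_X(Y) = ∇̃_X(Y) + V∘X∘Y`, `V` a vector field, where `∇̃` is some
torsion-free connection compatible with `m`. -/
def IsSpecialFamily {R V : Type*} [CommRing R] [LieRing V] [Module R V]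
    (S : SmoothSetting R V) (m : V → V → V) (SF : Set (V → V → V)) : Prop :=
  ∃ nt : V → V → V, IsConnection S nt ∧ IsTorsionFree nt ∧ IsCompatible nt m ∧
    SF = { n | ∃ W : V, n = fun X Y => nt X Y + m (m W X) Y }

/-- The connection `∇^W_X(Y) = ε∘∇̃_X(ε⁻¹∘Y) − ∇̃_{ε⁻¹∘Y}(ε)∘X + W*X*Y` on the
dual F-manifold, where `*` is the dual multiplication. -/
def dualConn {V : Type*} [LieRing V] (m : V → V → V) (ε εinv : V)
    (nt : V → V → V) (W : V) : V → V → V :=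
  fun X Y => m ε (nt X (m εinv Y)) - m (nt (m εinv Y) ε) X
    + dualMul m εinv (dualMul m εinv W X) Y

/-- The dual family `D_ε(S̃)` built from a chosen connection `nt ∈ S̃`. -/
def dualFamily {V : Type*} [LieRing V] (m : V → V → V) (ε εinv : V)
    (nt : V → V → V) : Set (V → V → V) :=
  { n | ∃ W : V, n = dualConn m ε εinv nt W }

/-- The dual family `D_ε(S̃)` of a family of connections `S̃`. -/
def dualFamilyOfSet {V : Type*} [LieRing V] (m : V → V → V) (ε εinv : V)
    (SF : Set (V → V → V)) : Set (V → V → V) :=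
  { n | ∃ nt ∈ SF, ∃ W : V, n = dualConn m ε εinv nt W }

/-- The second structure connection
`∇^F_X(Y) = ε∘∇̃_X(ε⁻¹∘Y) − ∇̃_{ε⁻¹∘Y}(ε)∘X` of `(M, ∘, e, ε, ∇̃)`. -/
def secondConn {V : Type*} [LieRing V] (m : V → V → V) (ε εinv : V)
    (nt : V → V → V) : V → V → V :=
  fun X Y => m ε (nt X (m εinv Y)) - m (nt (m εinv Y) ε) X

/-- The connection
`∇_X(Y) = ε∘∇̃_X(ε⁻¹∘Y) − ∇̃_{ε⁻¹∘Y}(ε)∘X + (1/2)[ε⁻¹,ε]∘X∘Y + U*X*Y`. -/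
def uDualConn {V : Type*} [LieRing V] [Module ℚ V] (m : V → V → V)
    (ε εinv U : V) (nt : V → V → V) : V → V → V :=
  fun X Y => secondConn m ε εinv nt X Y + (2 : ℚ)⁻¹ • m (m ⁅εinv, ε⁆ X) Y
    + dualMul m εinv (dualMul m εinv U X) Y

/-- The `k`-th power `X^k` of a vector field with respect to the multiplication
`m` with unit `e`. -/
def mpow {V : Type*} (m : V → V → V) (e X : V) : ℕ → V
  | 0 => e
  | k + 1 => m X (mpow m e X k)

/-- The Legendre transformation `L_u(S̃) = { u⁻¹∘∇̃_X(u∘Y) : ∇̃ ∈ S̃ }` of a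
family of connections `S̃` by an invertible vector field `u` (with inverse
`uinv`). -/
def legFamily {V : Type*} (m : V → V → V) (uinv u : V)
    (SF : Set (V → V → V)) : Set (V → V → V) :=
  { n | ∃ nt ∈ SF, n = fun X Y => m uinv (nt X (m u Y)) }

/-- **Corollary 4.10.** For an F-manifold `(M, ∘, e)` with
eventual identity `ε` and compatible torsion-free connection `∇̃`, the
torsion-free connections compatible with the dual multiplication `*` and of the
form `∇_X(Y) = ε∘∇̃_X(ε⁻¹∘Y) + A(Y)∘X` are exactly the connections
`∇^W_X(Y) = ε∘∇̃_X(ε⁻¹∘Y) − ∇̃_{ε⁻¹∘Y}(ε)∘X + W*X*Y`, `W` a vector field. -/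
theorem statement5 {R V : Type*} [CommRing R] [LieRing V] [Module R V]
    (S : SmoothSetting R V) (m : V → V → V) (e ε εinv : V)
    (hF : IsFManifold R m e) (hev : IsEventualIdentity R m e ε εinv)
    (nt : V → V → V) (hc : IsConnection S nt) (htf : IsTorsionFree nt)
    (hcm : IsCompatible nt m) :
    { n : V → V → V |
        (∃ A : V →ₗ[R] V, n = fun X Y => m ε (nt X (m εinv Y)) + m (A Y) X) ∧
          IsTorsionFree n ∧ IsCompatible n (dualMul m εinv) } =
      dualFamily m ε εinv nt := by
  obtain ⟨h1m, hFd⟩ := hev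
  have zl : ∀ a : V, m 0 a = 0 := by
    intro a
    have h := hF.smul_left (0 : R) 0 a
    rwa [zero_smul, zero_smul] at h
  letI rng : CommRing V :=
    { (inferInstance : AddCommGroup V) with
      mul := m
      one := e
      left_distrib := fun a b c' => show m a (b + c') = m a b + m a c' by
        rw [hF.comm a, hF.add_left, hF.comm b a, hF.comm c' a]
      right_distrib := fun a b c' => hF.add_left a b c'
      zero_mul := zl
      mul_zero := fun a => show m a 0 = 0 by rw [hF.comm]; exact zl a
      mul_assoc := hF.assoc
      one_mul := hF.unit
      mul_one := fun a => show m a e = a by rw [hF.comm]; exact hF.unit a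
      mul_comm := hF.comm }
  have hm' : ∀ a b : V, m a b = a * b := fun _ _ => rfl
  have h1 : ε * εinv = 1 := h1m
  have htf' : ∀ a b : V, nt a b - nt b a = ⁅a, b⁆ := htf
  have hT1 : ∀ a b c' : V, nt a (b*c') - nt a b*c' - b*nt a c'
      = nt b (a*c') - nt b a*c' - a*nt b c' := fun a b c' => (hcm a b c').1
  have hT2 : ∀ a b c' : V, nt a (b*c') - nt a b*c' - b*nt a c'
      = nt a (c'*b) - nt a c'*b - c'*nt a b := fun a b c' => (hcm a b c').2
  have hHMm : ∀ a b c' d : V,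
      ⁅a*b, c'*d⁆ - ⁅a*b, c'⁆*d - c'*⁅a*b, d⁆
        = a*(⁅b, c'*d⁆ - ⁅b, c'⁆*d - c'*⁅b, d⁆) + b*(⁅a, c'*d⁆ - ⁅a, c'⁆*d - c'*⁅a, d⁆) :=
    hF.hertling_manin
  -- L_ε(*) = 0
  have hLs : ∀ a b : V, ⁅ε, (a*b)*εinv⁆ - (⁅ε, a⁆*b)*εinv - (a*⁅ε, b⁆)*εinv = 0 := by
    intro a b
    have h := hFd.hertling_manin ε ε a b
    simp only [hFd.unit] at h
    simp only [dualMul, hm'] at h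
    linear_combination -h
  -- the eventual identity equation  L_ε(∘)(a,b) = [e,ε]∘a∘b
  have hE : ∀ a b : V, ⁅ε, a*b⁆ - ⁅ε, a⁆*b - a*⁅ε, b⁆ = ⁅(1:V), ε⁆*a*b := by
    intro a b
    have i1 := hLs a (b*ε)
    rw [show (a*(b*ε))*εinv = a*b from by linear_combination (a*b)*h1] at i1
    have i2 := hLs 1 (b*ε)
    rw [show ((1:V)*(b*ε))*εinv = b from by linear_combination b*h1] at i2
    linear_combination i1 - a*i2 + (b*⁅ε, a⁆ - a*b*⁅ε, (1:V)⁆)*h1 + (a*b)*(lie_skew (1:V) ε)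
  -- the ∇-version of the eventual identity equation
  have hE3 : ∀ a b : V, nt ε (a*b) - nt ε a*b - a*nt ε b
      = ⁅(1:V), ε⁆*a*b + nt (a*b) ε - nt a ε*b - a*nt b ε := by
    intro a b
    linear_combination htf' ε (a*b) - b*htf' ε a - a*htf' ε b + hE a b
  -- Hertling–Manin in terms of ∇(∘)
  have hHM2 : ∀ a b c' d : V,
      (nt (a*b) (c'*d) - nt (a*b) c'*d - c'*nt (a*b) d)
        - (nt (c'*d) (a*b) - nt (c'*d) a*b - a*nt (c'*d) b)
      = a*(nt b (c'*d) - nt b c'*d - c'*nt b d) + b*(nt a (c'*d) - nt a c'*d - c'*nt a d)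
        - c'*(nt d (a*b) - nt d a*b - a*nt d b) - d*(nt c' (a*b) - nt c' a*b - a*nt c' b) := by
    intro a b c' d
    linear_combination hHMm a b c' d + htf' (a*b) (c'*d) - d*htf' (a*b) c' - c'*htf' (a*b) d
      - a*htf' b (c'*d) + (a*d)*htf' b c' + (a*c')*htf' b d
      - b*htf' a (c'*d) + (b*d)*htf' a c' + (b*c')*htf' a d
  -- the key symmetry
  have hDag : ∀ a b c' : V,
      (nt (ε*a) (b*c') - nt (ε*a) b*c' - b*nt (ε*a) c')
        - a*(nt ε (b*c') - nt ε b*c' - b*nt ε c')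
      = (nt (ε*b) (a*c') - nt (ε*b) a*c' - a*nt (ε*b) c')
        - b*(nt ε (a*c') - nt ε a*c' - a*nt ε c') := by
    intro a b c'
    have hb1 := hT1 (b*c') ε a
    rw [show (b*c')*a = (a*c')*b from by ring] at hb1
    linear_combination hHM2 ε a b c' - hHM2 ε b a c' + ε*hT1 a b c'
      - c'*hT1 b ε a + c'*hT1 a ε b - c'*hT2 ε b a
      - b*hT1 c' ε a - b*hT2 ε c' a + a*hT1 c' ε b + a*hT2 ε c' b
      + hb1 - hT1 (a*c') ε b
  have hLe : ∀ a b : V, nt a (ε*εinv)*b = nt b (ε*εinv)*a := by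
    intro a b
    have t1 := hT1 a (ε*εinv) b
    rw [show (ε*εinv)*b = b from by linear_combination b*h1] at t1
    have t2 := hT1 b (ε*εinv) a
    rw [show (ε*εinv)*a = a from by linear_combination a*h1,
        show b*a = a*b from mul_comm b a] at t2
    linear_combination t2 - t1 + (nt b a - nt a b)*h1
  -- torsion-freeness core
  have hLemA : ∀ a b : V,
      (ε*nt a (εinv*b) - nt (εinv*b) ε*a) - (ε*nt b (εinv*a) - nt (εinv*a) ε*b) = ⁅a, b⁆ := by
    intro a b
    linear_combination ε*hT1 a εinv b - ε*hT1 b εinv a - ε*hT2 εinv b a + htf' a b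
      - b*htf' ε (εinv*a) + a*htf' ε (εinv*b) - b*hE εinv a + a*hE εinv b
      - b*hT1 a ε εinv + a*hT1 b ε εinv + (εinv*b)*htf' ε a - (εinv*a)*htf' ε b
      + hLe a b - b*hT2 ε a εinv + a*hT2 ε b εinv + (nt a b - nt b a)*h1
  have hTF : ∀ w : V, IsTorsionFree (dualConn m ε εinv nt w) := by
    intro w X Y
    simp only [dualConn, dualMul, hm']
    linear_combination hLemA X Y
  have hC1 : ∀ w X Y Z : V,
      covMul (dualConn m ε εinv nt w) (dualMul m εinv) X Y Z
        = covMul (dualConn m ε εinv nt w) (dualMul m εinv) Y X Z := by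
    intro w X Y Z
    simp only [covMul, dualConn, dualMul, hm']
    rw [show εinv*((Y*Z)*εinv) = (εinv*Y)*(εinv*Z) from by ring,
        show εinv*((X*Z)*εinv) = (εinv*X)*(εinv*Z) from by ring]
    have d := hDag (εinv*X) (εinv*Y) (εinv*Z)
    rw [show ε*(εinv*X) = X from by linear_combination X*h1,
        show ε*(εinv*Y) = Y from by linear_combination Y*h1] at d
    linear_combination ε*d + X*hE3 (εinv*Y) (εinv*Z) - Y*hE3 (εinv*X) (εinv*Z)
      + (-(X*Z*εinv)*nt ε (εinv*Y) + X*nt ε ((εinv*Y)*(εinv*Z))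
         + (Y*Z*εinv)*nt ε (εinv*X) - Y*nt ε ((εinv*X)*(εinv*Z)))*h1
  have hC2 : ∀ w X Y Z : V,
      covMul (dualConn m ε εinv nt w) (dualMul m εinv) X Y Z
        = covMul (dualConn m ε εinv nt w) (dualMul m εinv) X Z Y := by
    intro w X Y Z
    simp only [covMul, dualConn, dualMul, hm']
    rw [show εinv*((Y*Z)*εinv) = (εinv*Y)*(εinv*Z) from by ring,
        show εinv*((Z*Y)*εinv) = (εinv*Y)*(εinv*Z) from by ring]
    ring
  ext n
  simp only [Set.mem_setOf_eq, dualFamily]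
  constructor
  · rintro ⟨⟨A, hA⟩, htfn, -⟩
    have hn : ∀ X Y : V, n X Y = ε*nt X (εinv*Y) + A Y*X := by
      intro X Y; rw [hA]; rfl
    have hsym : ∀ X Y : V, (A Y + nt (εinv*Y) ε)*X = (A X + nt (εinv*X) ε)*Y := by
      intro X Y
      have ht := htfn X Y
      rw [hn X Y, hn Y X] at ht
      linear_combination ht - hLemA X Y
    have hAY : ∀ Y : V, A Y = (A 1 + nt (εinv*(1:V)) ε)*Y - nt (εinv*Y) ε := by
      intro Y
      linear_combination hsym 1 Y
    refine ⟨m (m (A 1 + nt (m εinv 1) ε) ε) ε, ?_⟩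
    funext X Y
    show n X Y = _
    rw [hn X Y]
    simp only [dualConn, dualMul, hm']
    linear_combination X*hAY Y
      - ((A 1 + nt (εinv*(1:V)) ε)*X*Y)*(ε*εinv+1)*h1
  · rintro ⟨w, rfl⟩
    refine ⟨⟨⟨⟨fun Y => m (m (m w εinv) εinv) Y - nt (m εinv Y) ε, ?_⟩, ?_⟩, ?_⟩,
      hTF w, fun X Y Z => ⟨hC1 w X Y Z, hC2 w X Y Z⟩⟩
    · intro a b
      simp only [hm']
      rw [show εinv*(a+b) = εinv*a + εinv*b from mul_add εinv a b, hc.add_left]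
      ring
    · intro r a
      simp only [RingHom.id_apply]
      rw [show m εinv (r • a) = r • m εinv a from by rw [hF.comm, hF.smul_left, hF.comm],
          show m (m (m w εinv) εinv) (r • a) = r • m (m (m w εinv) εinv) a from by
            rw [hF.comm, hF.smul_left, hF.comm],
          hc.smul_left, smul_sub]
    · funext X Y
      simp only [dualConn, dualMul, hm', LinearMap.coe_mk, AddHom.coe_mk]
      ring
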